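/- Let M ∈ ℝ^{n×n}, and let P, Q ∈ ℝ^{n×n} be symmetric with P positive semidefinite and MᵀPM − P ⪯ −Q. Then for all vectors e, v ∈ ℝⁿ: (Me + v)ᵀP(Me + v) − eᵀP e ≤ −λmin(Q)·‖e‖² + λmax(P)·‖v‖² + 2·‖PM‖_F·‖e‖·‖v‖. -/

import Mathlib

open Matrix MeasureTheory Filter

noncomputable def lamMin {n : ℕ} (A : Matrix (Fin n) (Fin n) ℝ) : ℝ :=
  sInf (spectrum ℝ A)

noncomputable def lamMax {n : ℕ} (A : Matrix (Fin n) (Fin n) ℝ) : ℝ :=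
  sSup (spectrum ℝ A)

noncomputable def frobNorm {m n : ℕ} (M : Matrix (Fin m) (Fin n) ℝ) : ℝ :=
  Real.sqrt (∑ i, ∑ j, (M i j) ^ 2)

noncomputable def mulVecE {m n : ℕ} (M : Matrix (Fin m) (Fin n) ℝ)
    (x : EuclideanSpace ℝ (Fin n)) : EuclideanSpace ℝ (Fin m) :=
  Matrix.toEuclideanLin M x

noncomputable def quadForm {n : ℕ} (P : Matrix (Fin n) (Fin n) ℝ)
    (x : EuclideanSpace ℝ (Fin n)) : ℝ :=
  inner ℝ x (mulVecE P x)

noncomputable def opNorm {m n : ℕ} (p : Matrix (Fin m) (Fin n) ℝ) : ℝ :=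
  ‖LinearMap.toContinuousLinearMap (Matrix.toEuclideanLin p)‖

section Aux

variable {n : ℕ}

lemma mulVecE_apply (A : Matrix (Fin n) (Fin n) ℝ) (x : EuclideanSpace ℝ (Fin n)) (i : Fin n) :
    mulVecE A x i = (A *ᵥ (fun j => x j)) i := rfl

lemma inner_eq_sum (x y : EuclideanSpace ℝ (Fin n)) :
    (inner ℝ x y : ℝ) = ∑ i, x i * y i := by
  simp [PiLp.inner_apply, RCLike.inner_apply, mul_comm]

lemma mulVecE_add (A : Matrix (Fin n) (Fin n) ℝ) (x y : EuclideanSpace ℝ (Fin n)) :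
    mulVecE A (x + y) = mulVecE A x + mulVecE A y := by
  simp [mulVecE]

lemma mulVecE_mul (A B : Matrix (Fin n) (Fin n) ℝ) (x : EuclideanSpace ℝ (Fin n)) :
    mulVecE (A * B) x = mulVecE A (mulVecE B x) := by
  ext i
  rw [mulVecE_apply, mulVecE_apply, ← Matrix.mulVec_mulVec]
  rfl

lemma mulVecE_sub (A B : Matrix (Fin n) (Fin n) ℝ) (x : EuclideanSpace ℝ (Fin n)) :
    mulVecE (A - B) x = mulVecE A x - mulVecE B x := by
  simp [mulVecE]

lemma quad_nonneg {A : Matrix (Fin n) (Fin n) ℝ} (hA : A.PosSemidef)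
    (x : EuclideanSpace ℝ (Fin n)) : 0 ≤ (inner ℝ x (mulVecE A x) : ℝ) := by
  have h := hA.dotProduct_mulVec_nonneg (fun i => x i)
  rw [inner_eq_sum]
  simpa [dotProduct, mulVecE_apply] using h

lemma inner_transpose (A : Matrix (Fin n) (Fin n) ℝ) (x y : EuclideanSpace ℝ (Fin n)) :
    (inner ℝ x (mulVecE Aᵀ y) : ℝ) = inner ℝ (mulVecE A x) y := by
  rw [inner_eq_sum, inner_eq_sum]
  have : (fun j => x j) ⬝ᵥ (Aᵀ *ᵥ fun j => y j) = (A *ᵥ fun j => x j) ⬝ᵥ (fun j => y j) := by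
    rw [dotProduct_mulVec, Matrix.vecMul_transpose]
  simpa [dotProduct, mulVecE_apply] using this

lemma quad_spectral {A : Matrix (Fin n) (Fin n) ℝ} (hA : A.IsHermitian)
    (x : EuclideanSpace ℝ (Fin n)) :
    (inner ℝ x (mulVecE A x) : ℝ) =
      ∑ i, hA.eigenvalues i * (inner ℝ x (hA.eigenvectorBasis i) : ℝ) ^ 2 := by
  have hsym : (Matrix.toEuclideanLin A).IsSymmetric :=
    (Matrix.isHermitian_iff_isSymmetric).1 hA
  have hb : ∀ i, mulVecE A (hA.eigenvectorBasis i) = hA.eigenvalues i • hA.eigenvectorBasis i :=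
    fun i => by ext j; exact congrFun (hA.mulVec_eigenvectorBasis i) j
  rw [← (hA.eigenvectorBasis).sum_inner_mul_inner x (mulVecE A x)]
  refine Finset.sum_congr rfl fun i _ => ?_
  have h1 : (inner ℝ (hA.eigenvectorBasis i) (mulVecE A x) : ℝ)
      = hA.eigenvalues i * inner ℝ (hA.eigenvectorBasis i) x := by
    rw [show (inner ℝ (hA.eigenvectorBasis i) (mulVecE A x) : ℝ)
        = inner ℝ (mulVecE A (hA.eigenvectorBasis i)) x from (hsym _ _).symm, hb i,
      inner_smul_left]
    simp
  rw [h1, real_inner_comm (hA.eigenvectorBasis i) x]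
  ring

lemma norm_sq_spectral {A : Matrix (Fin n) (Fin n) ℝ} (hA : A.IsHermitian)
    (x : EuclideanSpace ℝ (Fin n)) :
    ‖x‖ ^ 2 = ∑ i, (inner ℝ x (hA.eigenvectorBasis i) : ℝ) ^ 2 := by
  rw [← real_inner_self_eq_norm_sq, ← (hA.eigenvectorBasis).sum_inner_mul_inner x x]
  refine Finset.sum_congr rfl fun i _ => ?_
  rw [real_inner_comm (hA.eigenvectorBasis i) x]; ring

lemma lamMin_le_eig {A : Matrix (Fin n) (Fin n) ℝ} (hA : A.IsHermitian) (i : Fin n) :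
    lamMin A ≤ hA.eigenvalues i := by
  rw [lamMin, hA.spectrum_real_eq_range_eigenvalues]
  exact csInf_le (Set.Finite.bddBelow (Set.finite_range _)) (Set.mem_range_self i)

lemma eig_le_lamMax {A : Matrix (Fin n) (Fin n) ℝ} (hA : A.IsHermitian) (i : Fin n) :
    hA.eigenvalues i ≤ lamMax A := by
  rw [lamMax, hA.spectrum_real_eq_range_eigenvalues]
  exact le_csSup (Set.Finite.bddAbove (Set.finite_range _)) (Set.mem_range_self i)

lemma min_le_quad {A : Matrix (Fin n) (Fin n) ℝ} (hA : A.IsHermitian)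
    (x : EuclideanSpace ℝ (Fin n)) :
    lamMin A * ‖x‖ ^ 2 ≤ (inner ℝ x (mulVecE A x) : ℝ) := by
  rw [quad_spectral hA x, norm_sq_spectral hA x, Finset.mul_sum]
  exact Finset.sum_le_sum fun i _ =>
    mul_le_mul_of_nonneg_right (lamMin_le_eig hA i) (sq_nonneg _)

lemma quad_le_max {A : Matrix (Fin n) (Fin n) ℝ} (hA : A.IsHermitian)
    (x : EuclideanSpace ℝ (Fin n)) :
    (inner ℝ x (mulVecE A x) : ℝ) ≤ lamMax A * ‖x‖ ^ 2 := by
  rw [quad_spectral hA x, norm_sq_spectral hA x, Finset.mul_sum]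
  exact Finset.sum_le_sum fun i _ =>
    mul_le_mul_of_nonneg_right (eig_le_lamMax hA i) (sq_nonneg _)

lemma norm_mulVecE_le (A : Matrix (Fin n) (Fin n) ℝ) (x : EuclideanSpace ℝ (Fin n)) :
    ‖mulVecE A x‖ ≤ frobNorm A * ‖x‖ := by
  have hx : ‖x‖ = Real.sqrt (∑ j, (x j) ^ 2) := by
    rw [EuclideanSpace.norm_eq]; congr 1; refine Finset.sum_congr rfl fun j _ => ?_
    rw [Real.norm_eq_abs, sq_abs]
  have hAx : ‖mulVecE A x‖ = Real.sqrt (∑ i, ((A *ᵥ fun j => x j) i) ^ 2) := by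
    rw [EuclideanSpace.norm_eq]; refine congrArg _ (Finset.sum_congr rfl fun i _ => ?_)
    rw [Real.norm_eq_abs, sq_abs]; rfl
  rw [hx, hAx, frobNorm, ← Real.sqrt_mul (by positivity)]
  apply Real.sqrt_le_sqrt
  rw [Finset.sum_mul]
  refine Finset.sum_le_sum fun i _ => ?_
  calc ((A *ᵥ fun j => x j) i) ^ 2 = (∑ j, A i j * x j) ^ 2 := rfl
    _ ≤ (∑ j, (A i j) ^ 2) * ∑ j, (x j) ^ 2 :=
        Finset.sum_mul_sq_le_sq_mul_sq _ _ _

end Aux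

/-- Key one-step estimate in the proofs of Theorems 1 and 3: Lyapunov difference along
perturbed linear dynamics e⁺ = Me + v. -/
theorem stmt_9 {n : ℕ}
    (M P Q : Matrix (Fin n) (Fin n) ℝ)
    (hP : P.PosSemidef) (hQ : Q.IsHermitian)
    (hLyap : (P - Mᵀ * P * M - Q).PosSemidef) :
    ∀ e v : EuclideanSpace ℝ (Fin n),
      quadForm P (mulVecE M e + v) - quadForm P e ≤
        -lamMin Q * ‖e‖ ^ 2 + lamMax P * ‖v‖ ^ 2 + 2 * frobNorm (P * M) * ‖e‖ * ‖v‖ := by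
  intro e v
  have hsymP : (Matrix.toEuclideanLin P).IsSymmetric :=
    (Matrix.isHermitian_iff_isSymmetric).1 hP.1
  set Me := mulVecE M e with hMe
  -- expansion of the quadratic form
  have expand : quadForm P (Me + v) =
      inner ℝ Me (mulVecE P Me) + 2 * inner ℝ v (mulVecE P Me) + inner ℝ v (mulVecE P v) := by
    rw [quadForm, mulVecE_add, inner_add_left, inner_add_right, inner_add_right]
    have h1 : (inner ℝ Me (mulVecE P v) : ℝ) = inner ℝ v (mulVecE P Me) := by
      rw [show (inner ℝ Me (mulVecE P v) : ℝ) = inner ℝ (mulVecE P Me) v from (hsymP Me v).symm,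
        real_inner_comm]
    rw [h1]; ring
  -- Lyapunov inequality term
  have hQuadLyap : 0 ≤ (inner ℝ e (mulVecE (P - Mᵀ * P * M - Q) e) : ℝ) := quad_nonneg hLyap e
  have hMPM : (inner ℝ e (mulVecE (Mᵀ * P * M) e) : ℝ) = inner ℝ Me (mulVecE P Me) := by
    rw [show Mᵀ * P * M = Mᵀ * (P * M) by rw [Matrix.mul_assoc], mulVecE_mul, inner_transpose, mulVecE_mul]
  have hLyapIneq : (inner ℝ Me (mulVecE P Me) : ℝ) - inner ℝ e (mulVecE P e)
      ≤ -(inner ℝ e (mulVecE Q e) : ℝ) := by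
    rw [mulVecE_sub, mulVecE_sub, inner_sub_right, inner_sub_right] at hQuadLyap
    rw [hMPM] at hQuadLyap
    linarith
  have hQmin : lamMin Q * ‖e‖ ^ 2 ≤ (inner ℝ e (mulVecE Q e) : ℝ) := min_le_quad hQ e
  -- cross term
  have hPMe : mulVecE P Me = mulVecE (P * M) e := (mulVecE_mul P M e).symm
  have hcross : (inner ℝ v (mulVecE P Me) : ℝ) ≤ frobNorm (P * M) * ‖e‖ * ‖v‖ := by
    calc (inner ℝ v (mulVecE P Me) : ℝ) ≤ ‖v‖ * ‖mulVecE P Me‖ := real_inner_le_norm v _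
      _ ≤ ‖v‖ * (frobNorm (P * M) * ‖e‖) := by
          rw [hPMe]
          exact mul_le_mul_of_nonneg_left (norm_mulVecE_le _ e) (norm_nonneg v)
      _ = frobNorm (P * M) * ‖e‖ * ‖v‖ := by ring
  -- P term
  have hPmax : (inner ℝ v (mulVecE P v) : ℝ) ≤ lamMax P * ‖v‖ ^ 2 := quad_le_max hP.1 v
  have hq : quadForm P e = inner ℝ e (mulVecE P e) := rfl
  rw [expand, hq]
  linarith
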